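/- arXiv:1508.04385 — 4 statements merged into one kernel-verified Lean document; each statement's English description precedes it below -/
import Mathlib

section
/- Let G be a group acting on sets X and Y, with the action on X transitive and the diagonal action on X × Y free. Fix x ∈ X and let G_x be the stabilizer of x. Then the map Y → X × Y, y ↦ (x, y), induces a bijection between the orbit space Y/G_x (quotient of Y by the orbit relation of the G_x-action) and the orbit space (X × Y)/G (quotient of X × Y by the orbit relation of the diagonal G-action). -/
/-- Let a group `G` act on sets `X` and `Y`, with the action on `X` transitive and the
diagonal action on `X × Y` free. For `x : X` with stabilizer `G_x`, the map `y ↦ (x, y)`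
induces a bijection between the orbit spaces `Y / G_x` and `(X × Y) / G`. -/
theorem orbitSpace_equiv_of_transitive_of_diagonal_free
    {G X Y : Type*} [Group G] [MulAction G X] [MulAction G Y]
    (htrans : ∀ x x' : X, ∃ g : G, g • x = x')
    (hfree : ∀ (g : G) (p : X × Y), g • p = p → g = 1)
    (x : X) :
    ∃ e : Quotient (MulAction.orbitRel (MulAction.stabilizer G x) Y) ≃
        Quotient (MulAction.orbitRel G (X × Y)),
      ∀ y : Y, e (Quotient.mk _ y) = Quotient.mk _ (x, y) := by
  classical
  let F : Quotient (MulAction.orbitRel (MulAction.stabilizer G x) Y) →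
      Quotient (MulAction.orbitRel G (X × Y)) :=
    Quotient.lift (fun y => Quotient.mk _ (x, y)) (by
      rintro y y' ⟨g, hg⟩
      refine Quotient.sound ⟨(g : G), ?_⟩
      have hx : (g : G) • x = x := g.2
      simp only [Prod.smul_def, Prod.mk.injEq, hx]
      exact ⟨trivial, hg⟩)
  have hinj : Function.Injective F := by
    intro a b
    induction a using Quotient.inductionOn with | _ y =>
    induction b using Quotient.inductionOn with | _ y' =>
    intro h
    obtain ⟨g, hg⟩ := Quotient.exact h
    have hx : g • x = x := congrArg Prod.fst hg
    have hy : g • y' = y := congrArg Prod.snd hg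
    exact Quotient.sound ⟨⟨g, hx⟩, hy⟩
  have hsurj : Function.Surjective F := by
    intro q
    induction q using Quotient.inductionOn with | _ p =>
    obtain ⟨x', y'⟩ := p
    obtain ⟨g, hg⟩ := htrans x' x
    refine ⟨Quotient.mk _ (g • y'), Quotient.sound ⟨g, ?_⟩⟩
    simp [Prod.smul_def, hg]
  exact ⟨Equiv.ofBijective F ⟨hinj, hsurj⟩, fun y => rfl⟩
end

section
/- Let G be a compact topological group acting continuously on compact Hausdorff topological spaces X and Y. Suppose the action of G on X is transitive and the diagonal action of G on X × Y is free. Then for any x ∈ X, with G_x the stabilizer subgroup of x, the map y ↦ (x,y) induces a homeomorphism from the orbit space Y/G_x (with the quotient topology) onto the orbit space (X × Y)/G (with the quotient topology). -/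
/-- Topological version of Kapovitch–Ziller's Lemma 1.2: if a compact topological group `G`
acts continuously on compact Hausdorff spaces `X` and `Y`, the action on `X` is transitive
and the diagonal action on `X × Y` is free, then for any `x : X` the map `y ↦ (x, y)`
induces a homeomorphism `Y / G_x ≃ₜ (X × Y) / G` of orbit spaces with their quotient
topologies. -/
theorem orbitSpace_homeomorph_of_transitive_of_diagonal_free
    {G X Y : Type*} [Group G] [TopologicalSpace G] [IsTopologicalGroup G] [CompactSpace G]
    [TopologicalSpace X] [CompactSpace X] [T2Space X]
    [TopologicalSpace Y] [CompactSpace Y] [T2Space Y]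
    [MulAction G X] [ContinuousSMul G X]
    [MulAction G Y] [ContinuousSMul G Y]
    (htrans : ∀ x x' : X, ∃ g : G, g • x = x')
    (hfree : ∀ (g : G) (p : X × Y), g • p = p → g = 1)
    (x : X) :
    ∃ e : Quotient (MulAction.orbitRel (MulAction.stabilizer G x) Y) ≃ₜ
        Quotient (MulAction.orbitRel G (X × Y)),
      ∀ y : Y, e (Quotient.mk _ y) = Quotient.mk _ (x, y) := by
  haveI : ProperSMul G (X × Y) :=
    ⟨((continuous_fst.smul continuous_snd).prodMk continuous_snd).isProperMap⟩
  haveI : T2Space (Quotient (MulAction.orbitRel G (X × Y))) :=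
    t2Space_quotient_mulAction_of_properSMul
  -- the underlying map
  set R1 := MulAction.orbitRel (MulAction.stabilizer G x) Y
  set R2 := MulAction.orbitRel G (X × Y)
  have hwd : ∀ (a b : Y), R1 a b →
      (Quotient.mk R2 (x, a)) = Quotient.mk R2 (x, b) := by
    intro a b hab
    obtain ⟨g, hg⟩ := hab
    refine Quotient.sound ⟨(g : G), ?_⟩
    have hgx : (g : G) • x = x := g.2
    simp only [Prod.smul_mk, Prod.mk.injEq, hgx, true_and]
    exact hg
  let f : Quotient R1 → Quotient R2 := Quotient.lift (fun y => Quotient.mk R2 (x, y)) hwd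
  have hinj : Function.Injective f := by
    rintro ⟨a⟩ ⟨b⟩ h
    obtain ⟨g, hg⟩ := Quotient.exact h
    have hgx : g • x = x := congrArg Prod.fst hg
    exact Quotient.sound ⟨⟨g, hgx⟩, congrArg Prod.snd hg⟩
  have hsurj : Function.Surjective f := by
    rintro ⟨⟨x', y'⟩⟩
    obtain ⟨g, hg⟩ := htrans x' x
    refine ⟨Quotient.mk R1 (g • y'), Quotient.sound ⟨g, ?_⟩⟩
    show g • (x', y') = _
    rw [Prod.smul_mk, hg]
  have hcont : Continuous f :=
    Continuous.quotient_lift (continuous_quotient_mk'.comp (continuous_const.prodMk continuous_id)) hwd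
  exact ⟨(Continuous.homeoOfEquivCompactToT2 (f := Equiv.ofBijective f ⟨hinj, hsurj⟩) hcont),
    fun y => rfl⟩
end

section
/- Let Γ be a finite simple graph with vertex set V and let k ≥ 1. Then Γ admits a proper colouring with k colours if and only if there exists a function c : V → ℂ with c(v) ≠ 0 for all v ∈ V such that for every edge {u, v} of Γ one has Σ_{l=1}^{k} c(u)^{k−l} c(v)^{l−1} = 0. -/
open Finset

private lemma sum_reindex_aux (k : ℕ) (hk : 1 ≤ k) (x y : ℂ) :
    ∑ l ∈ Finset.Icc 1 k, x ^ (k - l) * y ^ (l - 1)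
      = ∑ i ∈ Finset.range k, y ^ i * x ^ (k - 1 - i) := by
  rw [← Finset.Ico_add_one_right_eq_Icc, Finset.sum_Ico_eq_sum_range]
  simp only [Nat.add_sub_cancel]
  refine Finset.sum_congr rfl fun i _ => ?_
  rw [mul_comm]
  congr 1
  · congr 1
    omega
  · congr 1
    omega

/-- the key algebraic identity -/
private lemma sum_mul_eq (k : ℕ) (hk : 1 ≤ k) (x y : ℂ) :
    (∑ l ∈ Finset.Icc 1 k, x ^ (k - l) * y ^ (l - 1)) * (y - x) = y ^ k - x ^ k := by
  rw [sum_reindex_aux k hk x y]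
  exact geom_sum₂_mul y x k

private lemma sum_of_eq (k : ℕ) (hk : 1 ≤ k) (x : ℂ) (hx : x ≠ 0) :
    ∑ l ∈ Finset.Icc 1 k, x ^ (k - l) * x ^ (l - 1) ≠ 0 := by
  rw [sum_reindex_aux k hk x x]
  have : ∀ i ∈ Finset.range k, x ^ i * x ^ (k - 1 - i) = x ^ (k - 1) := by
    intro i hi
    rw [← pow_add]
    congr 1
    have := Finset.mem_range.mp hi
    omega
  rw [Finset.sum_congr rfl this, Finset.sum_const, Finset.card_range, nsmul_eq_mul]
  exact mul_ne_zero (Nat.cast_ne_zero.mpr (by omega)) (pow_ne_zero _ hx)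

/-- A finite simple graph `Γ` is properly `k`-colourable (`k ≥ 1`) iff there is a nowhere
vanishing function `c : V → ℂ` such that `∑_{l=1}^{k} c(u)^{k-l} c(v)^{l-1} = 0` for every
edge `{u, v}` of `Γ`. -/
theorem colorable_iff_exists_nowhere_zero_complex_weights
    {V : Type*} [Fintype V] (Γ : SimpleGraph V) (k : ℕ) (hk : 1 ≤ k) :
    Γ.Colorable k ↔
      ∃ c : V → ℂ, (∀ v : V, c v ≠ 0) ∧
        ∀ u v : V, Γ.Adj u v →
          ∑ l ∈ Finset.Icc 1 k, c u ^ (k - l) * c v ^ (l - 1) = 0 := by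
  have hk0 : (k : ℕ) ≠ 0 := by omega
  constructor
  · rintro ⟨col⟩
    set ζ : ℂ := Complex.exp (2 * Real.pi * Complex.I / k) with hζdef
    have hprim : IsPrimitiveRoot ζ k := Complex.isPrimitiveRoot_exp k hk0
    have hζk : ζ ^ k = 1 := hprim.pow_eq_one
    have hζ0 : ζ ≠ 0 := by
      intro h
      rw [h, zero_pow hk0] at hζk
      exact zero_ne_one hζk
    refine ⟨fun v => ζ ^ (col v : ℕ), fun v => pow_ne_zero _ hζ0, ?_⟩
    intro u v huv
    have hne : ζ ^ (col u : ℕ) ≠ ζ ^ (col v : ℕ) := by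
      intro h
      exact col.valid huv (Fin.ext (hprim.pow_inj (col u).isLt (col v).isLt h))
    have := sum_mul_eq k hk (ζ ^ (col u : ℕ)) (ζ ^ (col v : ℕ))
    have hpows : (ζ ^ (col v : ℕ)) ^ k - (ζ ^ (col u : ℕ)) ^ k = 0 := by
      rw [← pow_mul, ← pow_mul, mul_comm ((col v : ℕ)) k, mul_comm ((col u : ℕ)) k,
        pow_mul, pow_mul, hζk, one_pow, one_pow, sub_self]
    rw [hpows] at this
    rcases mul_eq_zero.mp this with h | h
    · exact h
    · exact absurd (sub_eq_zero.mp h).symm hne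
  · rintro ⟨c, hc0, hsum⟩
    haveI : NeZero k := ⟨hk0⟩
    -- on each edge, powers agree and values differ
    have hedge : ∀ u v : V, Γ.Adj u v → c u ^ k = c v ^ k ∧ c u ≠ c v := by
      intro u v huv
      have hs := hsum u v huv
      have hne : c u ≠ c v := by
        intro h
        rw [h] at hs
        exact sum_of_eq k hk (c v) (hc0 v) hs
      have := sum_mul_eq k hk (c u) (c v)
      rw [hs, zero_mul] at this
      exact ⟨(sub_eq_zero.mp this.symm).symm, hne⟩
    -- c ^ k is constant on connected components
    have hreach : ∀ u v : V, Γ.Reachable u v → c u ^ k = c v ^ k := by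
      intro u v huv
      obtain ⟨p⟩ := huv
      induction p with
      | nil => rfl
      | cons h p ih => exact ((hedge _ _ h).1).trans ih
    -- normalized weights
    set d : V → ℂ := fun v => c v / c (Quot.out (Γ.connectedComponentMk v)) with hd
    have hrep : ∀ v : V, c v ^ k = c (Quot.out (Γ.connectedComponentMk v)) ^ k := by
      intro v
      apply hreach
      exact SimpleGraph.ConnectedComponent.exact (Quot.out_eq _).symm
    have hdk : ∀ v : V, d v ^ k = 1 := by
      intro v
      have h0 : c (Quot.out (Γ.connectedComponentMk v)) ≠ 0 := hc0 _
      rw [hd]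
      simp only
      rw [div_pow, ← hrep v, div_self (pow_ne_zero _ (hc0 v))]
    have hd0 : ∀ v : V, d v ≠ 0 := fun v =>
      div_ne_zero (hc0 v) (hc0 _)
    -- build a coloring valued in the k-th roots of unity
    let C : V → rootsOfUnity k ℂ := fun v =>
      ⟨Units.mk0 (d v) (hd0 v), by
        rw [mem_rootsOfUnity']
        simpa using hdk v⟩
    have hCvalid : ∀ u v : V, Γ.Adj u v → C u ≠ C v := by
      intro u v huv hCeq
      have hcomp : Γ.connectedComponentMk u = Γ.connectedComponentMk v :=
        SimpleGraph.ConnectedComponent.connectedComponentMk_eq_of_adj huv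
      have hdval : d u = d v := by
        have h1 : (C u : ℂˣ) = (C v : ℂˣ) := congrArg Subtype.val hCeq
        have h2 : ((C u : ℂˣ) : ℂ) = ((C v : ℂˣ) : ℂ) := congrArg Units.val h1
        simpa [C] using h2
      have : c u = c v := by
        rw [hd] at hdval
        simp only at hdval
        rw [hcomp] at hdval
        exact mul_right_cancel₀ (inv_ne_zero (hc0 _))
          (by simpa [div_eq_mul_inv] using hdval)
      exact (hedge u v huv).2 this
    have coloring : Γ.Coloring (rootsOfUnity k ℂ) :=
      SimpleGraph.Coloring.mk C (fun {u v} h => hCvalid u v h)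
    haveI : Fintype (rootsOfUnity k ℂ) := Fintype.ofFinite _
    have := coloring.colorable
    rwa [Fintype.card_eq_nat_card, Complex.card_rootsOfUnity k] at this
end

section
/- Let Γ be a finite simple connected graph with vertex set V and let k ≥ 1. Then Γ admits a proper colouring with k colours if and only if there exists a function c : V → ℂ, not identically zero, such that for every edge {u, v} of Γ one has Σ_{l=1}^{k} c(u)^{k−l} c(v)^{l−1} = 0. -/
open Finset Polynomial

private lemma edge_sum_eq (k : ℕ) (x y : ℂ) :
    ∑ l ∈ Finset.Icc 1 k, x ^ (k - l) * y ^ (l - 1)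
      = ∑ i ∈ Finset.range k, y ^ i * x ^ (k - 1 - i) := by
  rw [← Finset.Ico_add_one_right_eq_Icc, Finset.sum_Ico_eq_sum_range]
  refine Finset.sum_congr rfl fun i hi => ?_
  simp only [Finset.mem_range] at hi
  rw [mul_comm]
  congr 1
  · congr 1; omega
  · congr 1; omega

private lemma walk_prop {V : Type*} {Γ : SimpleGraph V} {P : V → Prop}
    (h : ∀ u v, Γ.Adj u v → P u → P v) {u v : V} (w : Γ.Walk u v) (hu : P u) : P v := by
  induction w with
  | nil => exact hu
  | cons h' p ih => exact ih (h _ _ h' hu)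

/-- A finite simple connected graph `Γ` is properly `k`-colourable (`k ≥ 1`) iff there is a
function `c : V → ℂ`, not identically zero, such that
`∑_{l=1}^{k} c(u)^{k-l} c(v)^{l-1} = 0` for every edge `{u, v}` of `Γ`. -/
theorem colorable_iff_exists_nontrivial_complex_weights_of_connected
    {V : Type*} [Fintype V] (Γ : SimpleGraph V) (hconn : Γ.Connected)
    (k : ℕ) (hk : 1 ≤ k) :
    Γ.Colorable k ↔
      ∃ c : V → ℂ, c ≠ 0 ∧
        ∀ u v : V, Γ.Adj u v →
          ∑ l ∈ Finset.Icc 1 k, c u ^ (k - l) * c v ^ (l - 1) = 0 := by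
  have hk0 : k ≠ 0 := by omega
  obtain ⟨v₀⟩ := hconn.nonempty
  constructor
  · rintro ⟨C⟩
    set ζ : ℂ := Complex.exp (2 * Real.pi * Complex.I / k)
    have hprim : IsPrimitiveRoot ζ k := Complex.isPrimitiveRoot_exp k hk0
    have hζ0 : ζ ≠ 0 := fun h => by
      have := hprim.pow_eq_one
      rw [h] at this
      simp [zero_pow hk0] at this
    refine ⟨fun v => ζ ^ (C v).val, ?_, ?_⟩
    · intro h
      have := congrFun h v₀
      exact pow_ne_zero _ hζ0 this
    · intro u v huv
      have hne : ζ ^ (C u).val ≠ ζ ^ (C v).val := by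
        intro h
        exact C.valid huv (Fin.ext (hprim.pow_inj (C u).isLt (C v).isLt h))
      have hpow : (ζ ^ (C v).val) ^ k = (ζ ^ (C u).val) ^ k := by
        rw [← pow_mul, ← pow_mul, mul_comm, mul_comm (C u).val k, pow_mul, pow_mul,
          hprim.pow_eq_one, one_pow, one_pow]
      rw [edge_sum_eq]
      have := geom_sum₂_mul (ζ ^ (C v).val) (ζ ^ (C u).val) k
      rw [hpow, sub_self] at this
      rcases mul_eq_zero.mp this with h | h
      · exact h
      · exact absurd (sub_eq_zero.mp h) hne.symm
  · rintro ⟨c, hc0, hsum⟩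
    rcases eq_or_lt_of_le hk with hk1 | hk2
    · -- k = 1 : no edges
      subst hk1
      refine ⟨⟨fun _ => 0, ?_⟩⟩
      intro u v huv
      have := hsum u v huv
      simp at this
    · -- k ≥ 2
      have hk1 : 1 ≤ k - 1 := by omega
      -- c is nowhere zero
      have hadj_ne : ∀ u v, Γ.Adj u v → c u ≠ 0 → c v ≠ 0 := by
        intro u v huv hu hv
        have h := hsum u v huv
        rw [edge_sum_eq] at h
        have : ∑ i ∈ Finset.range k, c v ^ i * c u ^ (k - 1 - i)
            = c u ^ (k - 1) := by
          rw [Finset.sum_eq_single 0]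
          · simp [hv]
          · intro b _ hb
            rw [hv, zero_pow hb, zero_mul]
          · simp [hk0, Nat.pos_of_ne_zero]
        rw [this] at h
        exact hu (pow_eq_zero_iff (by omega : k - 1 ≠ 0) |>.mp h)
      obtain ⟨w, hw⟩ : ∃ w, c w ≠ 0 := by
        by_contra h
        push_neg at h
        exact hc0 (funext fun v => h v)
      have hnz : ∀ v, c v ≠ 0 := fun v =>
        walk_prop hadj_ne ((hconn w v).some) hw
      -- adjacent vertices have distinct values with equal k-th powers
      have hadj : ∀ u v, Γ.Adj u v → c u ≠ c v ∧ c u ^ k = c v ^ k := by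
        intro u v huv
        have h := hsum u v huv
        rw [edge_sum_eq] at h
        have hne : c u ≠ c v := by
          intro he
          rw [← he] at h
          have : ∑ i ∈ Finset.range k, c u ^ i * c u ^ (k - 1 - i)
              = (k : ℂ) * c u ^ (k - 1) := by
            rw [Finset.sum_congr rfl fun i hi => ?_, Finset.sum_const, Finset.card_range,
              nsmul_eq_mul]
            rw [← pow_add]
            congr 1
            simp only [Finset.mem_range] at hi
            omega
          rw [this, mul_eq_zero] at h
          rcases h with h | h
          · exact hk0 (by exact_mod_cast h)
          · exact hnz u (pow_eq_zero_iff (by omega : k - 1 ≠ 0) |>.mp h)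
        refine ⟨hne, ?_⟩
        have := geom_sum₂_mul (c v) (c u) k
        rw [h, zero_mul] at this
        exact (sub_eq_zero.mp this.symm).symm
      -- all k-th powers equal
      set a : ℂ := c v₀ ^ k with ha
      have hall : ∀ v, c v ^ k = a := fun v =>
        (walk_prop (P := fun v => c v ^ k = a)
          (fun u v huv hu => ((hadj u v huv).2).symm.trans hu) ((hconn v₀ v).some) rfl)
      -- colour by k-th roots of a
      classical
      have hroots : ∀ v, c v ∈ (Polynomial.nthRoots k a).toFinset := by
        intro v
        rw [Multiset.mem_toFinset, Polynomial.mem_nthRoots (Nat.pos_of_ne_zero hk0)]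
        exact hall v
      let C : Γ.Coloring ((Polynomial.nthRoots k a).toFinset : Finset ℂ) :=
        ⟨fun v => ⟨c v, hroots v⟩, by
          intro u v huv h
          exact (hadj u v huv).1 (congrArg Subtype.val h)⟩
      refine C.colorable.mono ?_
      calc Fintype.card ((Polynomial.nthRoots k a).toFinset : Finset ℂ)
          = (Polynomial.nthRoots k a).toFinset.card := Fintype.card_coe _
        _ ≤ Multiset.card (Polynomial.nthRoots k a) := Multiset.toFinset_card_le _
        _ ≤ k := Polynomial.card_nthRoots k a
end
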